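/- arXiv:1706.04253 — 3 statements merged into one kernel-verified Lean document; each statement's English description precedes it below -/
import Mathlib

section
/- The l×l real symmetric matrix T with entries t_{ab} = cos(2πab/l) − sin(2πab/l) satisfies T² = l·I. -/
open Complex Finset

lemma sum_exp_root (l : ℕ) (hl : 0 < l) (k : ℤ) :
    ∑ b ∈ Finset.range l, Complex.exp (((2 * Real.pi * k * b / l : ℝ) : ℂ) * Complex.I)
      = if (l : ℤ) ∣ k then (l : ℂ) else 0 := by
  have hl0 : (l : ℝ) ≠ 0 := Nat.cast_ne_zero.mpr hl.ne'
  have hlc : (l : ℂ) ≠ 0 := Nat.cast_ne_zero.mpr hl.ne'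
  set z : ℂ := Complex.exp (((2 * Real.pi * k / l : ℝ) : ℂ) * Complex.I) with hz
  have h1 : ∀ b : ℕ, Complex.exp (((2 * Real.pi * k * b / l : ℝ) : ℂ) * Complex.I) = z ^ b := by
    intro b
    rw [hz, ← Complex.exp_nat_mul]
    congr 1
    push_cast
    ring
  simp only [h1]
  by_cases hdvd : (l : ℤ) ∣ k
  · obtain ⟨m, hm⟩ := hdvd
    have hz1 : z = 1 := by
      have : (((2 * Real.pi * k / l : ℝ) : ℂ) * Complex.I) = (m : ℤ) * (2 * Real.pi * Complex.I) := by
        push_cast [hm]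
        field_simp
      rw [hz, this, Complex.exp_int_mul_two_pi_mul_I]
    simp [hz1, hm]
  · have hzl : z ^ l = 1 := by
      rw [hz, ← Complex.exp_nat_mul]
      have : (l : ℂ) * (((2 * Real.pi * k / l : ℝ) : ℂ) * Complex.I) = (k : ℤ) * (2 * Real.pi * Complex.I) := by
        push_cast
        field_simp
      rw [this, Complex.exp_int_mul_two_pi_mul_I]
    have hz1 : z ≠ 1 := by
      intro h
      rw [hz, Complex.exp_eq_one_iff] at h
      obtain ⟨n, hn⟩ := h
      have hn' : ((2 * Real.pi * k / l : ℝ) : ℂ) * Complex.I = ((n : ℂ) * (2 * Real.pi)) * Complex.I := by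
        rw [hn]; ring
      have hI : ((2 * Real.pi * k / l : ℝ) : ℂ) = (n : ℂ) * (2 * Real.pi) :=
        mul_right_cancel₀ Complex.I_ne_zero hn' 
      have hr : (2 * Real.pi * k / l : ℝ) = (n : ℝ) * (2 * Real.pi) := by
        exact_mod_cast hI
      have hk : (k : ℝ) = (n : ℝ) * (l : ℝ) := by
        field_simp at hr
        nlinarith [Real.pi_ne_zero, Real.pi_pos]
      have : k = n * l := by exact_mod_cast hk
      exact hdvd ⟨n, by linarith [this]⟩
    rw [geom_sum_eq hz1, hzl, if_neg hdvd]
    simp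

lemma sum_cos_root (l : ℕ) (hl : 0 < l) (k : ℤ) :
    ∑ b ∈ Finset.range l, Real.cos (2 * Real.pi * k * b / l)
      = if (l : ℤ) ∣ k then (l : ℝ) else 0 := by
  have h := sum_exp_root l hl k
  calc ∑ b ∈ Finset.range l, Real.cos (2 * Real.pi * k * b / l)
      = ∑ b ∈ Finset.range l, (Complex.exp (((2 * Real.pi * k * b / l : ℝ) : ℂ) * Complex.I)).re := by
        exact Finset.sum_congr rfl fun b _ => (Complex.exp_ofReal_mul_I_re _).symm
    _ = (∑ b ∈ Finset.range l, Complex.exp (((2 * Real.pi * k * b / l : ℝ) : ℂ) * Complex.I)).re :=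
        (Complex.re_sum _ _).symm
    _ = if (l : ℤ) ∣ k then (l : ℝ) else 0 := by
        rw [h]; split <;> simp

lemma sum_sin_root (l : ℕ) (hl : 0 < l) (k : ℤ) :
    ∑ b ∈ Finset.range l, Real.sin (2 * Real.pi * k * b / l) = 0 := by
  have h := sum_exp_root l hl k
  calc ∑ b ∈ Finset.range l, Real.sin (2 * Real.pi * k * b / l)
      = ∑ b ∈ Finset.range l, (Complex.exp (((2 * Real.pi * k * b / l : ℝ) : ℂ) * Complex.I)).im := by
        exact Finset.sum_congr rfl fun b _ => (Complex.exp_ofReal_mul_I_im _).symm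
    _ = (∑ b ∈ Finset.range l, Complex.exp (((2 * Real.pi * k * b / l : ℝ) : ℂ) * Complex.I)).im :=
        (Complex.im_sum _ _).symm
    _ = 0 := by rw [h]; split <;> simp

/-- The `l × l` real symmetric matrix `T` with entries
`t_{ab} = cos(2πab/l) - sin(2πab/l)` satisfies `T² = l·I`. -/
theorem polygon_transition_matrix_square (l : ℕ) (hl : 3 ≤ l) :
    (Matrix.of fun a b : Fin l =>
        Real.cos (2 * Real.pi * a.val * b.val / l)
          - Real.sin (2 * Real.pi * a.val * b.val / l))
      * (Matrix.of fun a b : Fin l =>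
        Real.cos (2 * Real.pi * a.val * b.val / l)
          - Real.sin (2 * Real.pi * a.val * b.val / l))
      = (l : ℝ) • (1 : Matrix (Fin l) (Fin l) ℝ) := by
  have hl0 : 0 < l := by omega
  have hlr : (l : ℝ) ≠ 0 := Nat.cast_ne_zero.mpr hl0.ne'
  ext a c
  rw [Matrix.mul_apply]
  set kd : ℤ := (a.val : ℤ) - (c.val : ℤ) with hkd
  set ks : ℤ := (a.val : ℤ) + (c.val : ℤ) with hks
  have key : ∀ b : Fin l,
      (Matrix.of fun a b : Fin l =>
        Real.cos (2 * Real.pi * a.val * b.val / l)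
          - Real.sin (2 * Real.pi * a.val * b.val / l)) a b *
      (Matrix.of fun a b : Fin l =>
        Real.cos (2 * Real.pi * a.val * b.val / l)
          - Real.sin (2 * Real.pi * a.val * b.val / l)) b c
      = Real.cos (2 * Real.pi * (kd : ℝ) * b.val / l)
        - Real.sin (2 * Real.pi * (ks : ℝ) * b.val / l) := by
    intro b
    simp only [Matrix.of_apply]
    have hcos : (2 * Real.pi * (kd : ℝ) * b.val / l)
        = 2 * Real.pi * a.val * b.val / l - 2 * Real.pi * b.val * c.val / l := by
      rw [hkd]; push_cast; ring
    have hsin : (2 * Real.pi * (ks : ℝ) * b.val / l)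
        = 2 * Real.pi * a.val * b.val / l + 2 * Real.pi * b.val * c.val / l := by
      rw [hks]; push_cast; ring
    rw [hcos, hsin, Real.cos_sub, Real.sin_add]
    ring
  rw [Finset.sum_congr rfl (fun b _ => key b)]
  rw [Finset.sum_sub_distrib]
  have e1 : ∑ b : Fin l, Real.cos (2 * Real.pi * (kd : ℝ) * b.val / l)
      = ∑ b ∈ Finset.range l, Real.cos (2 * Real.pi * (kd : ℝ) * b / l) :=
    Fin.sum_univ_eq_sum_range (fun b => Real.cos (2 * Real.pi * (kd : ℝ) * b / l)) l
  have e2 : ∑ b : Fin l, Real.sin (2 * Real.pi * (ks : ℝ) * b.val / l)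
      = ∑ b ∈ Finset.range l, Real.sin (2 * Real.pi * (ks : ℝ) * b / l) :=
    Fin.sum_univ_eq_sum_range (fun b => Real.sin (2 * Real.pi * (ks : ℝ) * b / l)) l
  rw [e1, e2, sum_cos_root l hl0, sum_sin_root l hl0, sub_zero]
  have hiff : (l : ℤ) ∣ kd ↔ a = c := by
    rw [hkd]
    constructor
    · intro h
      have ha := a.isLt; have hc := c.isLt
      have : (a.val : ℤ) - (c.val : ℤ) = 0 := by
        rcases h with ⟨m, hm⟩
        have hl' : (0 : ℤ) < l := by exact_mod_cast hl0
        rcases lt_trichotomy m 0 with hm0 | hm0 | hm0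
        · have : (l : ℤ) * m ≤ -l := by nlinarith
          omega
        · subst hm0; simpa using hm
        · have : (l : ℤ) ≤ l * m := by nlinarith
          omega
      have : a.val = c.val := by omega
      exact Fin.ext this
    · rintro rfl; simp
  by_cases h : a = c
  · simp [hiff, h, Matrix.one_apply]
  · rw [if_neg (fun hd => h (hiff.mp hd))]
    simp [Matrix.one_apply, h]
end

section
/- The hyperoctahedral mutation matrix Q = q²I + q(1−q)M₁ + (1−q)²M₂ on 2n vertices has exactly three eigenvalues: q² + (2n−2)q(1−q) + (1−q)² with multiplicity 1, (2q−1)² with multiplicity n−1, and (2q−1) with multiplicity n. -/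
open Polynomial in
set_option maxRecDepth 2000 in
/-- The hyperoctahedral mutation matrix `Q = q²I + q(1-q)M₁ + (1-q)²M₂` on `2n`
vertices has exactly three eigenvalues: `q² + (2n-2)q(1-q) + (1-q)²` with
multiplicity `1`, `(2q-1)²` with multiplicity `n-1`, and `2q-1` with
multiplicity `n` — expressed via the factorization of its characteristic
polynomial. -/
theorem hyperoctahedron_mutation_matrix_eigenvalues (n : ℕ) (hn : 2 ≤ n) (q : ℝ)
    (M : ℕ → Matrix (Fin (2 * n)) (Fin (2 * n)) ℝ)
    (hM : ∀ i, M i = Matrix.of fun a b =>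
      if (if a = b then 0 else if a.val + b.val = 2 * n - 1 then 2 else 1) = i
        then (1 : ℝ) else 0)
    (Q : Matrix (Fin (2 * n)) (Fin (2 * n)) ℝ)
    (hQ : Q = q ^ 2 • (1 : Matrix (Fin (2 * n)) (Fin (2 * n)) ℝ)
      + (q * (1 - q)) • M 1 + (1 - q) ^ 2 • M 2) :
    Q.charpoly
      = (X - C (q ^ 2 + (2 * (n : ℝ) - 2) * q * (1 - q) + (1 - q) ^ 2))
        * (X - C ((2 * q - 1) ^ 2)) ^ (n - 1)
        * (X - C (2 * q - 1)) ^ n := by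
  have hn0 : (n : ℝ) ≠ 0 := Nat.cast_ne_zero.mpr (by omega)
  have hQe : ∀ k j : Fin (2*n), Q k j
      = q*(1-q) + (q*(2*q-1)) * (if j = k then 1 else 0)
        + ((2*q-1)*(q-1)) * (if j = Fin.rev k then 1 else 0) := by
    intro k j
    have hk := k.isLt; have hj := j.isLt
    rw [hQ, hM 1, hM 2]
    simp only [Matrix.add_apply, Matrix.smul_apply, Matrix.of_apply, Matrix.one_apply,
      smul_eq_mul]
    by_cases h1 : k = j
    · subst h1
      have h3 : ¬ (k = Fin.rev k) := by
        simp only [Fin.ext_iff, Fin.val_rev]; omega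
      simp only [if_pos rfl, if_neg h3]
      norm_num; try ring
    · have h4 : ¬ j = k := fun h => h1 h.symm
      by_cases h2 : (k:ℕ) + (j:ℕ) = 2*n-1
      · have h3 : j = Fin.rev k := by
          simp only [Fin.ext_iff, Fin.val_rev]; omega
        simp only [if_neg h1, if_neg h4, if_pos h2, if_pos h3]
        norm_num; try ring
      · have h3 : ¬ j = Fin.rev k := by
          simp only [Fin.ext_iff, Fin.val_rev]; omega
        simp only [if_neg h1, if_neg h4, if_neg h2, if_neg h3]
        norm_num; try ring
  set z : Fin (2*n) := ⟨0, by omega⟩ with hzdef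
  have hzv : (z : ℕ) = 0 := rfl
  set U : Matrix (Fin (2*n)) (Fin (2*n)) ℝ := Matrix.of (fun k c =>
    if (c:ℕ) = 0 then 1
    else if (c:ℕ) < n then
      (if k = c then (1:ℝ) else 0) + (if k = Fin.rev c then 1 else 0)
        - (if k = z then 1 else 0) - (if k = Fin.rev z then 1 else 0)
    else (if k = Fin.rev c then (1:ℝ) else 0) - (if k = c then 1 else 0)) with hUdef
  set V : Matrix (Fin (2*n)) (Fin (2*n)) ℝ := Matrix.of (fun r k =>
    if (r:ℕ) = 0 then 1/(2*(n:ℝ))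
    else if (r:ℕ) < n then
      (1/2) * ((if k = r then (1:ℝ) else 0) + (if k = Fin.rev r then 1 else 0) - 1/(n:ℝ))
    else (1/2) * ((if k = Fin.rev r then (1:ℝ) else 0) - (if k = r then 1 else 0))) with hVdef
  set g : ℕ → ℝ := fun m =>
    if m = 0 then q ^ 2 + (2 * (n : ℝ) - 2) * q * (1 - q) + (1 - q) ^ 2
    else if m < n then (2*q-1)^2 else (2*q-1) with hgdef
  set D : Matrix (Fin (2*n)) (Fin (2*n)) ℝ := Matrix.diagonal (fun i => g (i : ℕ)) with hDdef
  -- column sums of U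
  have hUcol : ∀ c : Fin (2*n), (∑ j, U j c) = if (c:ℕ) = 0 then (2*(n:ℝ)) else 0 := by
    intro c
    by_cases hc0 : (c:ℕ) = 0
    · simp only [hUdef, Matrix.of_apply, hc0]
      norm_num [Finset.card_univ]
      try push_cast
      try ring
    · by_cases hcn : (c:ℕ) < n
      · simp only [hUdef, Matrix.of_apply, hc0, if_false, hcn, if_true,
          Finset.sum_sub_distrib, Finset.sum_add_distrib, Finset.sum_ite_eq',
          Finset.mem_univ, if_true]
        norm_num
      · simp only [hUdef, Matrix.of_apply, hc0, if_false, hcn,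
          Finset.sum_sub_distrib, Finset.sum_ite_eq', Finset.mem_univ, if_true]
        norm_num
  -- behaviour of U under row reversal
  have hUrev : ∀ k c : Fin (2*n), U (Fin.rev k) c
      = if (c:ℕ) = 0 then 1 else if (c:ℕ) < n then U k c else - U k c := by
    intro k c
    by_cases hc0 : (c:ℕ) = 0
    · simp [hUdef, Matrix.of_apply, hc0]
    · by_cases hcn : (c:ℕ) < n
      · simp only [hUdef, Matrix.of_apply, Fin.rev_rev, Fin.rev_inj, Fin.rev_eq_iff,
          hc0, hcn, if_true, if_false]
        ring
      · simp only [hUdef, Matrix.of_apply, Fin.rev_rev, Fin.rev_inj, Fin.rev_eq_iff,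
          hc0, hcn, if_true, if_false]
        ring
  -- V is a left inverse of U
  have hVU : V * U = 1 := by
    ext r c
    rw [Matrix.mul_apply, Matrix.one_apply]
    have hrlt := r.isLt; have hclt := c.isLt
    by_cases hc0 : (c:ℕ) = 0
    · have hU1 : ∀ k : Fin (2*n), U k c = 1 := by intro k; simp [hUdef, hc0]
      simp only [hU1, mul_one]
      by_cases hr0 : (r:ℕ) = 0
      · have hrc : r = c := by rw [Fin.ext_iff]; omega
        have hV1 : ∀ k : Fin (2*n), V r k = 1/(2*(n:ℝ)) := by
          intro k; simp [hVdef, hr0]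
        simp only [hV1, if_pos hrc]
        simp only [Finset.sum_const, Finset.card_univ, Fintype.card_fin, nsmul_eq_mul]
        push_cast; field_simp
      · have hrc : ¬ r = c := by rw [Fin.ext_iff]; omega
        simp only [hrc, if_false]
        by_cases hrn : (r:ℕ) < n
        · simp only [hVdef, Matrix.of_apply, hr0, hrn, if_true, if_false]
          simp only [mul_sub, mul_add, mul_ite, mul_one, mul_zero, Finset.sum_sub_distrib,
            Finset.sum_add_distrib, Finset.sum_ite_eq', Finset.mem_univ, if_true,
            Finset.sum_const, Finset.card_univ, Fintype.card_fin, nsmul_eq_mul]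
          field_simp; try ring
          norm_num
        · simp only [hVdef, Matrix.of_apply, hr0, hrn, if_false]
          simp only [mul_sub, mul_ite, mul_one, mul_zero, Finset.sum_sub_distrib,
            Finset.sum_ite_eq', Finset.mem_univ, if_true]
          ring
    · by_cases hcn : (c:ℕ) < n
      · -- middle column
        simp only [hUdef, Matrix.of_apply, hc0, hcn, if_true, if_false]
        simp only [mul_sub, mul_add, mul_ite, mul_one, mul_zero, Finset.sum_sub_distrib,
          Finset.sum_add_distrib, Finset.sum_ite_eq', Finset.mem_univ, if_true]
        simp only [hVdef, Matrix.of_apply, Fin.rev_rev, Fin.rev_inj, Fin.rev_eq_iff]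
        by_cases hr0 : (r:ℕ) = 0
        · have hrc : ¬ r = c := by rw [Fin.ext_iff]; omega
          simp only [hr0, if_true, eq_self_iff_true, hrc, if_false]
          ring
        · by_cases hrn : (r:ℕ) < n
          · have f1 : ¬ (c = Fin.rev r) := by
              rw [Fin.ext_iff]; rw [Fin.val_rev]; omega
            have f2 : ¬ (z = r) := by rw [Fin.ext_iff]; omega
            have f3 : ¬ (z = Fin.rev r) := by
              rw [Fin.ext_iff]; rw [Fin.val_rev]; omega
            simp only [hr0, hrn, if_true, if_false, f1, f2, f3]
            by_cases hcr : c = r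
            · have hrc : r = c := hcr.symm
              simp only [if_pos hcr, if_pos hrc]; ring
            · have hrc : ¬ r = c := fun h => hcr h.symm
              simp only [if_neg hcr, if_neg hrc]; ring
          · have hrc : ¬ r = c := by rw [Fin.ext_iff]; omega
            simp only [hr0, hrn, if_true, if_false, hrc]
            ring
      · -- high column
        simp only [hUdef, Matrix.of_apply, hc0, hcn, if_true, if_false]
        simp only [mul_sub, mul_ite, mul_one, mul_zero, Finset.sum_sub_distrib,
          Finset.sum_ite_eq', Finset.mem_univ, if_true]
        simp only [hVdef, Matrix.of_apply, Fin.rev_rev, Fin.rev_inj, Fin.rev_eq_iff]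
        by_cases hr0 : (r:ℕ) = 0
        · have hrc : ¬ r = c := by rw [Fin.ext_iff]; omega
          simp only [hr0, if_true, hrc, if_false]
          ring
        · by_cases hrn : (r:ℕ) < n
          · have hrc : ¬ r = c := by rw [Fin.ext_iff]; omega
            simp only [hr0, hrn, if_true, if_false, hrc]
            ring
          · have f1 : ¬ (c = Fin.rev r) := by
              rw [Fin.ext_iff]; rw [Fin.val_rev]; omega
            simp only [hr0, hrn, if_true, if_false, f1]
            by_cases hcr : c = r
            · have hrc : r = c := hcr.symm
              simp only [if_pos hcr, if_pos hrc]; ring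
            · have hrc : ¬ r = c := fun h => hcr h.symm
              simp only [if_neg hcr, if_neg hrc]; ring
  -- Q * U = U * D
  have hQU : Q * U = U * D := by
    ext k c
    rw [Matrix.mul_apply, hDdef, Matrix.mul_diagonal]
    simp only [hQe]
    simp only [add_mul, mul_assoc, ite_mul, one_mul, zero_mul, Finset.sum_add_distrib,
      ← Finset.mul_sum, Finset.sum_ite_eq', Finset.mem_univ, if_true, hUcol]
    rw [hUrev k c]
    by_cases hc0 : (c:ℕ) = 0
    · have hUkc : U k c = 1 := by simp [hUdef, hc0]
      simp only [hgdef, hUkc, hc0, if_pos rfl, eq_self_iff_true, if_true]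
      ring
    · by_cases hcn : (c:ℕ) < n
      · simp only [hgdef, hc0, hcn, if_true, if_false]
        ring
      · simp only [hgdef, hc0, hcn, if_true, if_false]
        ring
  -- assemble
  have hUVone : U * V = 1 := mul_eq_one_comm.mp hVU
  have hQdec : Q = U * D * V := by
    rw [← hQU, Matrix.mul_assoc, hUVone, Matrix.mul_one]
  have key : Matrix.charmatrix Q
      = U.map (C : ℝ →+* ℝ[X]) * Matrix.charmatrix D * V.map (C : ℝ →+* ℝ[X]) := by
    have h1 : (Matrix.scalar (Fin (2*n)) (X : ℝ[X])) = (X : ℝ[X]) • (1 : Matrix (Fin (2*n)) (Fin (2*n)) ℝ[X]) := by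
      ext i j
      by_cases h : i = j <;>
        simp [Matrix.scalar_apply, Matrix.diagonal_apply, Matrix.one_apply, h]
    rw [Matrix.charmatrix, Matrix.charmatrix, RingHom.mapMatrix_apply, RingHom.mapMatrix_apply, h1]
    rw [Matrix.mul_sub, Matrix.sub_mul]
    congr 1
    · rw [mul_smul_comm, mul_one, smul_mul_assoc, ← Matrix.map_mul, hUVone,
        Matrix.map_one _ (map_zero C) (map_one C)]
    · rw [← Matrix.map_mul, ← Matrix.map_mul, ← hQdec]
  have hDchar : Matrix.charmatrix D = Matrix.diagonal (fun i : Fin (2*n) => (X : ℝ[X]) - C (g (i:ℕ))) := by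
    rw [hDdef]
    ext i j
    by_cases h : i = j
    · subst h
      rw [Matrix.charmatrix_apply_eq, Matrix.diagonal_apply_eq, Matrix.diagonal_apply_eq]
    · rw [Matrix.charmatrix_apply_ne _ _ _ h, Matrix.diagonal_apply_ne _ h,
        Matrix.diagonal_apply_ne _ h, map_zero, neg_zero]
  have hUVC : (U.map (C : ℝ →+* ℝ[X])) * (V.map (C : ℝ →+* ℝ[X])) = 1 := by
    rw [← Matrix.map_mul, hUVone, Matrix.map_one _ (map_zero C) (map_one C)]
  rw [Matrix.charpoly, key]
  rw [Matrix.det_mul, Matrix.det_mul]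
  have hdets : (U.map (C : ℝ →+* ℝ[X])).det * (Matrix.charmatrix D).det
      * (V.map (C : ℝ →+* ℝ[X])).det
      = ((U.map (C : ℝ →+* ℝ[X])).det * (V.map (C : ℝ →+* ℝ[X])).det)
        * (Matrix.charmatrix D).det := by ring
  rw [hdets, ← Matrix.det_mul, hUVC, Matrix.det_one, one_mul]
  rw [hDchar, Matrix.det_diagonal]
  -- evaluate the product
  rw [Fin.prod_univ_eq_prod_range (fun m => (X : ℝ[X]) - C (g m)) (2*n)]
  rw [show 2*n = n + n from two_mul n, Finset.prod_range_add]
  have h0mem : 0 ∈ Finset.range n := Finset.mem_range.mpr (by omega)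
  have hblock1 : (∏ i ∈ Finset.range n, ((X:ℝ[X]) - C (g i)))
      = (X - C (q ^ 2 + (2 * (n : ℝ) - 2) * q * (1 - q) + (1 - q) ^ 2))
        * (X - C ((2 * q - 1) ^ 2)) ^ (n - 1) := by
    rw [← Finset.mul_prod_erase _ _ h0mem]
    have hcongr : ∀ i ∈ (Finset.range n).erase 0,
        (X:ℝ[X]) - C (g i) = X - C ((2*q-1)^2) := by
      intro i hi
      simp only [Finset.mem_erase, Finset.mem_range] at hi
      simp only [hgdef]
      rw [if_neg hi.1, if_pos hi.2]
    rw [Finset.prod_congr rfl hcongr, Finset.prod_const,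
      Finset.card_erase_of_mem h0mem, Finset.card_range]
    have hg0 : g 0 = q ^ 2 + (2 * (n : ℝ) - 2) * q * (1 - q) + (1 - q) ^ 2 := by
      simp only [hgdef]; norm_num
    rw [hg0]
  have hblock2 : (∏ i ∈ Finset.range n, ((X:ℝ[X]) - C (g (n + i)))) = (X - C (2*q - 1)) ^ n := by
    have hcongr : ∀ i ∈ Finset.range n, (X:ℝ[X]) - C (g (n+i)) = X - C (2*q-1) := by
      intro i hi
      simp only [hgdef]
      rw [if_neg (by omega), if_neg (by omega)]
    rw [Finset.prod_congr rfl hcongr, Finset.prod_const, Finset.card_range]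
  rw [hblock1, hblock2]
end

section
/- The (2n)×(2n) transition matrix T_n for the hyperoctahedron, built from blocks T₀₀, T₀₁, T₁₀, T₁₁ (T₀₀ has first row and column all 1, diagonal entries −1 except the (0,0) entry 1, zeros elsewhere; T₀₁ and T₁₀ its horizontal/vertical mirror images; T₁₁ the negative of the horizontal mirror of T₁₀), has determinant det(T_n) = (−1)ⁿ · 2ⁿ · n². -/
open Matrix

namespace HyperAux

variable (n : ℕ) [NeZero n]

set_option linter.unusedSectionVars false

/-- reversal permutation matrix -/
def R : Matrix (Fin n) (Fin n) ℚ := fun i j => if j = Fin.rev i then 1 else 0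

def A : Matrix (Fin n ⊕ Fin n) (Fin n ⊕ Fin n) ℚ := Matrix.fromBlocks 1 (R n) (R n) (-1)

def U : Matrix (Fin n ⊕ Fin n) (Fin 4) ℚ := fun p k =>
  ![1, if p = Sum.inl 0 then 1 else 0,
    Sum.elim (fun _ => 1) (fun _ => -1) p,
    if p = Sum.inr (Fin.rev 0) then 1 else 0] k

def W : Matrix (Fin 4) (Fin n ⊕ Fin n) ℚ := fun k q =>
  ![if q = Sum.inl 0 then 1 else 0, 1,
    if q = Sum.inr (Fin.rev 0) then 1 else 0,
    Sum.elim (fun _ => 1) (fun _ => -1) q] k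

def U' : Matrix (Fin n ⊕ Fin n) (Fin 4) ℚ := fun p k =>
  ![Sum.elim (fun _ => 2) (fun _ => 0) p,
    (if p = Sum.inl 0 then 1 else 0) + (if p = Sum.inr (Fin.rev 0) then 1 else 0),
    Sum.elim (fun _ => 0) (fun _ => 2) p,
    (if p = Sum.inl 0 then 1 else 0) - (if p = Sum.inr (Fin.rev 0) then 1 else 0)] k

lemma R_mul_R : R n * R n = 1 := by
  ext i j
  simp only [Matrix.mul_apply, R, Matrix.one_apply, ite_mul, one_mul, zero_mul]
  rw [Finset.sum_ite_eq' Finset.univ (Fin.rev i)]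
  simp [Fin.rev_rev, eq_comm]

lemma A_mul_A : A n * A n = (2 : ℚ) • 1 := by
  rw [A, fromBlocks_multiply, ← fromBlocks_one, Matrix.fromBlocks_smul,
    Matrix.fromBlocks_inj]
  refine ⟨?_, ?_, ?_, ?_⟩ <;> simp [R_mul_R, two_smul]

lemma det_A : (A n).det = (-2 : ℚ) ^ n := by
  rw [A, det_fromBlocks_one₁₁, R_mul_R]
  have h : (-1 - 1 : Matrix (Fin n) (Fin n) ℚ) = (-2 : ℚ) • 1 := by
    rw [neg_smul, two_smul, neg_add, sub_eq_add_neg]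
  rw [h, det_smul, det_one, Fintype.card_fin, mul_one]

lemma mulA_inl (X : Matrix (Fin n ⊕ Fin n) (Fin 4) ℚ) (i : Fin n) (k : Fin 4) :
    (A n * X) (Sum.inl i) k = X (Sum.inl i) k + X (Sum.inr (Fin.rev i)) k := by
  simp only [Matrix.mul_apply, Fintype.sum_sum_type, A, fromBlocks_apply₁₁,
    fromBlocks_apply₁₂, Matrix.one_apply, R, ite_mul, one_mul, zero_mul]
  rw [Finset.sum_ite_eq Finset.univ i, Finset.sum_ite_eq' Finset.univ (Fin.rev i)]
  simp

lemma mulA_inr (X : Matrix (Fin n ⊕ Fin n) (Fin 4) ℚ) (i : Fin n) (k : Fin 4) :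
    (A n * X) (Sum.inr i) k = X (Sum.inl (Fin.rev i)) k - X (Sum.inr i) k := by
  simp only [Matrix.mul_apply, Fintype.sum_sum_type, A, fromBlocks_apply₂₁,
    fromBlocks_apply₂₂, Matrix.one_apply, R, Matrix.neg_apply, ite_mul, one_mul, zero_mul,
    neg_mul]
  rw [Finset.sum_ite_eq' Finset.univ (Fin.rev i)]
  rw [Finset.sum_neg_distrib, Finset.sum_ite_eq Finset.univ i]
  simp [sub_eq_add_neg]

lemma A_mul_U : A n * U n = U' n := by
  ext p k
  rcases p with i | i
  · rw [mulA_inl]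
    fin_cases k <;>
      simp [U, U', Fin.rev_inj] <;>
      first
        | norm_num
        | (split_ifs <;> norm_num)
  · rw [mulA_inr]
    have hrev : ∀ i : Fin n, Fin.rev i = 0 ↔ i = Fin.rev 0 := by
      intro i; rw [← Fin.rev_inj, Fin.rev_rev]
    fin_cases k <;>
      simp [U, U', hrev, Fin.rev_inj] <;>
      first
        | norm_num
        | (split_ifs <;> norm_num)

lemma W_mul_U' : W n * U' n =
    !![2, 1, 0, 1; 2*(n:ℚ), 2, 2*(n:ℚ), 0; 0, 1, 2, -1; 2*(n:ℚ), 0, -(2*(n:ℚ)), 2] := by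
  ext k l
  fin_cases k <;> fin_cases l <;>
    simp [W, U', Matrix.mul_apply, Fintype.sum_sum_type, ite_mul, mul_ite,
      Finset.sum_ite_eq', Finset.sum_add_distrib, Finset.sum_sub_distrib,
      Finset.sum_const, Finset.card_univ, Fintype.card_fin, nsmul_eq_mul] <;>
    ring

set_option maxHeartbeats 1000000 in
lemma key (T00 T01 T10 T11 : Matrix (Fin n) (Fin n) ℤ)
    (h00 : ∀ i j, T00 i j =
      if i.val = 0 ∨ j.val = 0 then 1 else if i = j then -1 else 0)
    (h01 : ∀ i j, T01 i j = T00 i (Fin.rev j))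
    (h10 : ∀ i j, T10 i j = T00 (Fin.rev i) j)
    (h11 : ∀ i j, T11 i j = -(T10 i (Fin.rev j))) :
    (Matrix.fromBlocks T00 T01 T10 T11).map (Int.cast : ℤ → ℚ)
      = -(A n) + U n * W n := by
  have hconv : ∀ i j : Fin n,
      (↑(if i.val = 0 ∨ j.val = 0 then (1:ℤ) else if i = j then -1 else 0) : ℚ)
      = if i.val = 0 ∨ j.val = 0 then (1:ℚ) else if i = j then -1 else 0 := by
    intro i j; split_ifs <;> norm_num
  ext p q
  rcases p with i | i <;> rcases q with j | j <;>
    simp only [Matrix.map_apply, fromBlocks_apply₁₁, fromBlocks_apply₁₂,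
      fromBlocks_apply₂₁, fromBlocks_apply₂₂] <;>
    [rw [h00 i j, hconv]; rw [h01 i j, h00, hconv]; rw [h10 i j, h00, hconv];
     rw [h11 i j, h10 i (Fin.rev j), h00, Int.cast_neg, hconv]] <;>
    (have hi := i.isLt; have hj := j.isLt) <;>
    simp only [Matrix.add_apply, Matrix.neg_apply, A, fromBlocks_apply₁₁,
      fromBlocks_apply₁₂, fromBlocks_apply₂₁, fromBlocks_apply₂₂,
      Matrix.mul_apply, Fin.sum_univ_four, U, W, Matrix.one_apply, R,
      Matrix.cons_val_zero, Matrix.cons_val_one, Matrix.head_cons,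
      Matrix.cons_val_two, Matrix.cons_val_three, Matrix.tail_cons, Sum.inl.injEq, Sum.inr.injEq,
      reduceCtorEq, Sum.elim_inl, Sum.elim_inr, if_false] <;>
    (try simp only [show ((![(0:ℚ), 1, if j = Fin.rev 0 then 1 else 0, -1]) 3 = -1) from rfl,
      show ((![(1:ℚ), if i = 0 then 1 else 0, 1, 0]) 3 = 0) from rfl]) <;>
    split_ifs <;>
    first
      | (exfalso; simp only [Fin.ext_iff, Fin.val_rev, Fin.val_zero] at * <;> omega)
      | norm_num

end HyperAux

open HyperAux in
/-- The `(2n)×(2n)` transition matrix `T_n` of the hyperoctahedron, built from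
the blocks `T₀₀` (first row and column all `1`, diagonal `-1` except entry
`(0,0) = 1`, zeros elsewhere), `T₀₁`, `T₁₀` its horizontal and vertical mirror
images, and `T₁₁` the negative of the horizontal mirror of `T₁₀`, has
determinant `(-1)ⁿ · 2ⁿ · n²`. -/
theorem hyperoctahedron_transition_matrix_det (n : ℕ) (hn : 2 ≤ n)
    (T00 T01 T10 T11 : Matrix (Fin n) (Fin n) ℤ)
    (h00 : ∀ i j, T00 i j =
      if i.val = 0 ∨ j.val = 0 then 1 else if i = j then -1 else 0)
    (h01 : ∀ i j, T01 i j = T00 i (Fin.rev j))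
    (h10 : ∀ i j, T10 i j = T00 (Fin.rev i) j)
    (h11 : ∀ i j, T11 i j = -(T10 i (Fin.rev j))) :
    (Matrix.fromBlocks T00 T01 T10 T11).det = (-1) ^ n * 2 ^ n * (n : ℤ) ^ 2 := by
  haveI : NeZero n := ⟨by omega⟩
  have hAA1 : (-(A n)) * ((-1/2 : ℚ) • A n) = 1 := by
    rw [Matrix.mul_smul, Matrix.neg_mul, A_mul_A n, smul_neg, smul_smul]
    norm_num
  have hfact : -(A n) + U n * W n
      = (-(A n)) * (1 + (((-1/2 : ℚ) • A n) * U n) * W n) := by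
    rw [Matrix.mul_add, Matrix.mul_one]
    congr 1
    rw [Matrix.mul_assoc ((-1/2 : ℚ) • A n) (U n) (W n),
      ← Matrix.mul_assoc (-(A n)) ((-1/2 : ℚ) • A n) (U n * W n), hAA1,
      Matrix.one_mul]
  have hQ : (((Matrix.fromBlocks T00 T01 T10 T11).det : ℤ) : ℚ)
      = (-2:ℚ)^n * (n:ℚ)^2 := by
    have hmapdet := RingHom.map_det (Int.castRingHom ℚ) (Matrix.fromBlocks T00 T01 T10 T11)
    simp only [RingHom.mapMatrix_apply, Int.coe_castRingHom] at hmapdet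
    rw [hmapdet]
    rw [key n T00 T01 T10 T11 h00 h01 h10 h11, hfact, Matrix.det_mul,
      Matrix.det_one_add_mul_comm]
    have h2 : W n * (((-1/2:ℚ) • A n) * U n)
        = (-1/2 : ℚ) • (W n * U' n) := by
      rw [Matrix.smul_mul, A_mul_U, Matrix.mul_smul]
    rw [h2, W_mul_U' n]
    have h3 : (1 : Matrix (Fin 4) (Fin 4) ℚ) + (-1/2 : ℚ) •
          !![2, 1, 0, 1; 2*(n:ℚ), 2, 2*(n:ℚ), 0; 0, 1, 2, -1;
             2*(n:ℚ), 0, -(2*(n:ℚ)), 2]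
        = !![0, -1/2, 0, -1/2; -(n:ℚ), 0, -(n:ℚ), 0; 0, -1/2, 0, 1/2;
             -(n:ℚ), 0, (n:ℚ), 0] := by
      ext i j
      fin_cases i <;> fin_cases j <;> simp [Matrix.one_apply] <;> ring
    rw [h3]
    have h4 : (-(A n)).det = (-2:ℚ)^n := by
      rw [Matrix.det_neg, det_A n, Fintype.card_sum, Fintype.card_fin, ← two_mul,
        pow_mul]
      norm_num
    have h5 : (!![0, -1/2, 0, -1/2; -(n:ℚ), 0, -(n:ℚ), 0; 0, -1/2, 0, 1/2;
        -(n:ℚ), 0, (n:ℚ), 0]).det = (n:ℚ)^2 := by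
      simp [Matrix.det_succ_row_zero, Fin.sum_univ_succ, Matrix.det_fin_three,
        Fin.succAbove, Fin.castSucc, Fin.castAdd, Fin.castLE]
      ring
    rw [h4, h5]
  have hcast : (((Matrix.fromBlocks T00 T01 T10 T11).det : ℤ) : ℚ)
      = (((-1) ^ n * 2 ^ n * (n : ℤ) ^ 2 : ℤ) : ℚ) := by
    rw [hQ]
    push_cast
    rw [neg_pow]
  exact_mod_cast hcast
end
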